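/- Let N ∈ ℕ and x_A, x_B ∈ (0,1) with x_A ≤ x_B. Define the binomial weights p_k(x) = C(N,k)·x^k·(1−x)^{N−k} for k = 0,…,N, and let k* be the least k ∈ {0,…,N} with Σ_{j=0}^{k} (p_j(x_A) + p_j(x_B)) > 1 (it exists since the full sum equals 2). Then ⌊x_A·N⌋ ≤ k* ≤ ⌈x_B·N⌉. -/

import Mathlib

set_option maxHeartbeats 1000000

open Finset

namespace BinomAux

noncomputable def f (n : ℕ) (p : ℝ) (k : ℕ) : ℝ :=
  (n.choose k : ℝ) * p ^ k * (1 - p) ^ (n - k)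

lemma f_nonneg {n : ℕ} {p : ℝ} (h0 : 0 ≤ p) (h1 : p ≤ 1) (k : ℕ) : 0 ≤ f n p k := by
  have : (0:ℝ) ≤ 1 - p := by linarith
  exact mul_nonneg (mul_nonneg (by positivity) (pow_nonneg h0 _)) (pow_nonneg this _)

lemma f_pos {n : ℕ} {p : ℝ} (h0 : 0 < p) (h1 : p < 1) {k : ℕ} (hk : k ≤ n) :
    0 < f n p k := by
  have : (0:ℝ) < 1 - p := by linarith
  have hc : 0 < (n.choose k : ℝ) := by
    exact_mod_cast Nat.choose_pos hk
  exact mul_pos (mul_pos hc (pow_pos h0 _)) (pow_pos this _)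

lemma f_zero {n k : ℕ} (p : ℝ) (hk : n < k) : f n p k = 0 := by
  simp [f, Nat.choose_eq_zero_of_lt hk]

lemma sum_f (n : ℕ) (p : ℝ) : ∑ k ∈ range (n + 1), f n p k = 1 := by
  have h := add_pow p (1 - p) n
  have h2 : p + (1 - p) = 1 := by ring
  rw [h2, one_pow] at h
  rw [h]
  exact Finset.sum_congr rfl fun k _ => by unfold f; ring

lemma step (n : ℕ) (p : ℝ) (i : ℕ) :
    f n p (i + 1) * ((i + 1 : ℝ) * (1 - p)) = f n p i * (((n - i : ℕ) : ℝ) * p) := by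
  rcases lt_or_ge i n with h | h
  · have hchoose : (n.choose (i+1) : ℝ) * (i+1) = (n.choose i : ℝ) * ((n - i : ℕ) : ℝ) := by
      exact_mod_cast congrArg (Nat.cast (R := ℝ)) (Nat.choose_succ_right_eq n i)
    have hsub : n - i = (n - (i+1)) + 1 := by omega
    unfold f
    rw [hsub] at hchoose ⊢
    push_cast at hchoose ⊢
    linear_combination (p ^ i * p * (1 - p) ^ (n - (i+1)) * (1 - p)) * hchoose
  · have h1 : n < i + 1 := by omega
    rw [f_zero p h1]
    have : n - i = 0 := by omega
    rw [this]
    simp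

lemma f_sym {n k : ℕ} (p : ℝ) (hk : k ≤ n) : f n p k = f n (1 - p) (n - k) := by
  unfold f
  rw [Nat.choose_symm hk]
  have h1 : (1 : ℝ) - (1 - p) = p := by ring
  rw [h1]
  have h2 : n - (n - k) = k := by omega
  rw [h2]
  ring

lemma cdf_sym {n k : ℕ} (p : ℝ) (hk : k ≤ n) :
    ∑ j ∈ range (k + 1), f n p j = 1 - ∑ j ∈ range (n - k), f n (1 - p) j := by
  have key : ∑ j ∈ range (n - k), f n (1 - p) j + ∑ j ∈ range (k+1), f n p j = 1 := by
    have hsplit : ∑ j ∈ Finset.Ico 0 (n - k), f n (1-p) j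
        + ∑ j ∈ Finset.Ico (n - k) (n + 1), f n (1-p) j = ∑ j ∈ Finset.Ico 0 (n+1), f n (1-p) j :=
      Finset.sum_Ico_consecutive _ (by omega) (by omega)
    have h2 : ∑ j ∈ Finset.Ico (n - k) (n + 1), f n (1-p) j = ∑ j ∈ range (k+1), f n p j := by
      rw [Finset.sum_Ico_eq_sum_range]
      have hlen : n + 1 - (n - k) = k + 1 := by omega
      rw [hlen]
      rw [← Finset.sum_range_reflect]
      apply Finset.sum_congr rfl
      intro j hj
      simp only [Finset.mem_range] at hj
      have hj' : j ≤ n := by omega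
      rw [f_sym p hj']
      congr 1
      omega
    rw [h2] at hsplit
    simp only [← Finset.range_eq_Ico] at hsplit
    rw [hsplit]
    exact sum_f n (1-p)
  linarith

lemma mean_f (n : ℕ) (p : ℝ) : ∑ k ∈ range (n + 1), (k : ℝ) * f n p k = n * p := by
  rcases Nat.eq_zero_or_pos n with rfl | hn
  · simp
  obtain ⟨m, rfl⟩ := Nat.exists_eq_succ_of_ne_zero (Nat.pos_iff_ne_zero.mp hn)
  rw [Finset.sum_range_succ']
  simp only [Nat.cast_zero, zero_mul, add_zero, Nat.succ_eq_add_one]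
  have hterm : ∀ j : ℕ, ((j + 1 : ℕ) : ℝ) * f (m+1) p (j+1) = ((m:ℝ)+1) * p * f m p j := by
    intro j
    rcases le_or_gt j m with hj | hj
    · have hchoose : (((m+1).choose (j+1) : ℕ) : ℝ) * ((j:ℝ)+1) = ((m:ℝ)+1) * ((m.choose j : ℕ) : ℝ) := by
        have h2 : ((m+1) * (m.choose j) : ℕ) = ((m+1).choose (j+1)) * (j+1) :=
          Nat.add_one_mul_choose_eq m j
        exact_mod_cast congrArg (Nat.cast (R := ℝ)) h2.symm
      unfold f
      have hsub : m + 1 - (j + 1) = m - j := by omega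
      rw [hsub]
      push_cast
      linear_combination (p ^ j * p * (1 - p) ^ (m - j)) * hchoose
    · rw [f_zero p (by omega), f_zero p (by omega)]
      ring
  calc ∑ j ∈ range (m+1), ((j + 1 : ℕ) : ℝ) * f (m+1) p (j+1)
      = ∑ j ∈ range (m+1), ((m:ℝ)+1) * p * f m p j :=
        Finset.sum_congr rfl fun j _ => hterm j
    _ = ((m:ℝ)+1) * p * ∑ j ∈ range (m+1), f m p j := by rw [Finset.mul_sum]
    _ = ((m:ℝ)+1) * p := by rw [sum_f]; ring
    _ = ((m+1 : ℕ) : ℝ) * p := by push_cast; ring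

lemma lower (n m : ℕ) (p : ℝ) (hp : 0 < p) (hp2 : p ≤ 1/2) (hm : 1 ≤ m)
    (hmean : (m:ℝ) ≤ n * p) :
    ∑ j ∈ range m, f n p j < 1/2 := by
  have hp1 : p < 1 := by linarith
  have h1p : (0:ℝ) < 1 - p := by linarith
  have h2m : 2 * m ≤ n := by
    have : (2 * m : ℝ) ≤ n := by nlinarith [mul_nonneg (Nat.cast_nonneg (α := ℝ) n) (by linarith : (0:ℝ) ≤ 1 - 2*p)]
    exact_mod_cast this
  have hnm : ((n - (m-1) : ℕ) : ℝ) = (n:ℝ) - m + 1 := by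
    have h : n - (m-1) + (m-1) = n := by omega
    have h2 : ((n - (m-1) : ℕ) : ℝ) + ((m-1 : ℕ) : ℝ) = n := by exact_mod_cast congrArg (Nat.cast (R := ℝ)) h
    have h3 : ((m-1 : ℕ) : ℝ) = (m:ℝ) - 1 := by
      have : (m-1) + 1 = m := by omega
      have := congrArg (Nat.cast (R := ℝ)) this
      push_cast at this
      linarith
    linarith
  have hbase : f n p (m-1) < f n p m := by
    have E := step n p (m-1)
    have hm1 : m - 1 + 1 = m := by omega
    rw [hm1] at E
    -- E : f n p m * (m * (1-p)) = f n p (m-1) * ((n-(m-1)) * p)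
    have hfpos : 0 < f n p (m-1) := f_pos hp hp1 (by omega)
    have hcoef : ((m:ℝ)) * (1-p) < ((n - (m-1) : ℕ) : ℝ) * p := by
      rw [hnm]; nlinarith
    have hmul : f n p (m-1) * ((m:ℝ) * (1-p)) < f n p m * ((m:ℝ) * (1-p)) := by
      calc f n p (m-1) * ((m:ℝ) * (1-p)) < f n p (m-1) * (((n - (m-1) : ℕ) : ℝ) * p) := by
            exact mul_lt_mul_of_pos_left hcoef hfpos
        _ = f n p m * (((m-1:ℕ):ℝ) + 1) * (1-p) := by rw [← E]; push_cast [hm1]; ring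
        _ = f n p m * ((m:ℝ) * (1-p)) := by
            have : ((m-1:ℕ):ℝ) + 1 = (m:ℝ) := by
              exact_mod_cast congrArg (Nat.cast (R := ℝ)) hm1
            rw [this]; ring
    have hpos : (0:ℝ) < (m:ℝ) * (1-p) := by
      have : (0:ℝ) < (m:ℝ) := by exact_mod_cast hm
      positivity
    exact lt_of_mul_lt_mul_right hmul hpos.le
  have pair : ∀ j, j < m → f n p (m-1-j) ≤ f n p (m+j) := by
    intro j
    induction j with
    | zero =>
      intro _
      simpa using hbase.le
    | succ j ih =>
      intro hj1
      have IH := ih (by omega)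
      set a := m - 1 - (j+1) with ha
      have ha1 : a + 1 = m - 1 - j := by omega
      have E1 := step n p a
      rw [ha1] at E1
      have E2 := step n p (m+j)
      set x := f n p a
      set y := f n p (m-1-j)
      set z := f n p (m+j)
      set w := f n p (m+j+1)
      set A : ℝ := ((a:ℝ)+1) * (1-p) with hA
      set D : ℝ := ((n - a : ℕ) : ℝ) * p with hD
      set B : ℝ := (((m+j : ℕ):ℝ) + 1) * (1-p) with hB
      set Cc : ℝ := ((n - (m+j) : ℕ) : ℝ) * p with hC
      -- cast facts
      have hcaR : ((n - a : ℕ) : ℝ) = (n:ℝ) - m + 2 + j := by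
        have h1 : (n - a) + a = n := by omega
        have h2 : a + (2 + j) = m := by omega
        have h1' := congrArg (Nat.cast (R := ℝ)) h1
        have h2' := congrArg (Nat.cast (R := ℝ)) h2
        push_cast at h1' h2'
        linarith
      have hc2R : ((n - (m+j) : ℕ) : ℝ) = (n:ℝ) - m - j := by
        have h1 : (n - (m+j)) + (m+j) = n := by omega
        have h1' := congrArg (Nat.cast (R := ℝ)) h1
        push_cast at h1'
        linarith
      have haR : (a:ℝ) = (m:ℝ) - 2 - j := by
        have h2 : a + (2 + j) = m := by omega
        have h2' := congrArg (Nat.cast (R := ℝ)) h2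
        push_cast at h2'
        linarith
      have hJ0 : (0:ℝ) ≤ (j:ℝ) := Nat.cast_nonneg j
      have hJ : ((j:ℝ)) + 2 ≤ (m:ℝ) := by exact_mod_cast (show j + 2 ≤ m by omega)
      have h2MR : 2*(m:ℝ) ≤ (n:ℝ) := by exact_mod_cast h2m
      -- coefficient inequality A * B ≤ Cc * D
      have coeff : A * B ≤ Cc * D := by
        rw [hA, hB, hC, hD, hcaR, hc2R, haR]
        push_cast
        have hdecomp : ((n:ℝ) - m - j) * p * (((n:ℝ) - m + 2 + j) * p)
            - (((m:ℝ) - 2 - j)+1) * (1-p) * (((m:ℝ) + j + 1) * (1-p))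
            = ((n:ℝ)*p + p - m) * (p*((n:ℝ)-m+1) + (1-p)*m) + ((j:ℝ)+1)^2*(1-2*p) := by
          ring
        have t1 : (0:ℝ) ≤ (n:ℝ)*p + p - m := by linarith
        have t2 : (0:ℝ) ≤ p*((n:ℝ)-m+1) + (1-p)*m := by nlinarith
        have t3 : (0:ℝ) ≤ ((j:ℝ)+1)^2*(1-2*p) :=
          mul_nonneg (sq_nonneg _) (by linarith)
        nlinarith [mul_nonneg t1 t2]
      have hApos : (0:ℝ) ≤ A := by rw [hA]; positivity
      have hBpos : (0:ℝ) < B := by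
        rw [hB]; positivity
      have hDpos : (0:ℝ) < D := by
        rw [hD, hcaR]; nlinarith
      have hznn : (0:ℝ) ≤ z := f_nonneg hp.le hp1.le _
      have h1 : x*(D*B) = y*(A*B) := by linear_combination B * E1.symm
      have h2 : y*(A*B) ≤ z*(A*B) :=
        mul_le_mul_of_nonneg_right IH (mul_nonneg hApos (by linarith))
      have h3 : z*(A*B) ≤ z*(Cc*D) := mul_le_mul_of_nonneg_left coeff hznn
      have h4 : z*(Cc*D) = w*(D*B) := by linear_combination (-D) * E2
      have hfin : x*(D*B) ≤ w*(D*B) := by linarith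
      have := le_of_mul_le_mul_right hfin (by positivity)
      exact this
  -- conclude
  have hreflect : ∑ j ∈ range m, f n p (m - 1 - j) = ∑ j ∈ range m, f n p j :=
    Finset.sum_range_reflect _ _
  have hlt : ∑ j ∈ range m, f n p (m-1-j) < ∑ j ∈ range m, f n p (m+j) := by
    apply Finset.sum_lt_sum (fun i hi => pair i (Finset.mem_range.mp hi))
    exact ⟨0, Finset.mem_range.mpr (by omega), by simpa using hbase⟩
  have hsum2 : ∑ j ∈ range m, f n p (m+j) = ∑ j ∈ Finset.Ico m (2*m), f n p j := by
    have h' : 2*m - m = m := by omega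
    rw [Finset.sum_Ico_eq_sum_range, h']
  have hsub : ∑ j ∈ Finset.Ico m (2*m), f n p j ≤ ∑ j ∈ Finset.Ico m (n+1), f n p j := by
    apply Finset.sum_le_sum_of_subset_of_nonneg
    · exact Finset.Ico_subset_Ico le_rfl (by omega)
    · intro i _ _; exact f_nonneg hp.le hp1.le i
  have htot : ∑ j ∈ range m, f n p j + ∑ j ∈ Finset.Ico m (n+1), f n p j = 1 := by
    have h := Finset.sum_Ico_consecutive (f := fun j => f n p j) (m := 0) (k := n+1)
      (by omega : 0 ≤ m) (by omega : m ≤ n+1)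
    simp only [← Finset.range_eq_Ico] at h
    rw [h, sum_f]
  linarith

noncomputable def eterm (n c : ℕ) (p : ℝ) (i : ℕ) : ℝ :=
  f n p (c + i) - if i ≤ c then f n p (c - i) else 0

lemma down_step (n c j : ℕ) (p : ℝ) (hp : 0 < p) (hp1 : p < 1) (hj : j + 1 ≤ c) (hcn : c ≤ n)
    (hcoeff : p^2 * (((n:ℝ) - c - j) * ((n:ℝ) - c + j + 1)) ≤ (1-p)^2 * (((c:ℝ) - j) * ((c:ℝ) + j + 1)))
    (hle : f n p (c + j) ≤ f n p (c - j)) :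
    f n p (c + j + 1) ≤ f n p (c - (j+1)) := by
  rcases le_or_gt n (c + j) with htop | htop
  · rw [f_zero p (by omega)]
    exact f_nonneg hp.le hp1.le _
  · have E1 := step n p (c + j)
    have E2 := step n p (c - (j+1))
    have hidx : c - (j+1) + 1 = c - j := by omega
    rw [hidx] at E2
    set x := f n p (c + j + 1)
    set y := f n p (c + j)
    set z := f n p (c - j)
    set w := f n p (c - (j+1))
    -- casts
    have hc1 : ((n - (c + j) : ℕ) : ℝ) = (n:ℝ) - c - j := by
      have h1 : (n - (c+j)) + (c+j) = n := by omega
      have h1' := congrArg (Nat.cast (R := ℝ)) h1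
      push_cast at h1'; linarith
    have hc2 : ((n - (c - (j+1)) : ℕ) : ℝ) = (n:ℝ) - c + j + 1 := by
      have h1 : (n - (c - (j+1))) + (c - (j+1)) = n := by omega
      have h2 : (c - (j+1)) + (j+1) = c := by omega
      have h1' := congrArg (Nat.cast (R := ℝ)) h1
      have h2' := congrArg (Nat.cast (R := ℝ)) h2
      push_cast at h1' h2'; linarith
    have hc3 : ((c - (j+1) : ℕ) : ℝ) = (c:ℝ) - j - 1 := by
      have h2 : (c - (j+1)) + (j+1) = c := by omega
      have h2' := congrArg (Nat.cast (R := ℝ)) h2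
      push_cast at h2'; linarith
    rw [hc1] at E1
    rw [hc2, hc3] at E2
    -- E1 : x * ((↑(c+j)+1)*(1-p)) = y * (((n:ℝ)-c-j) * p)
    -- E2 : z * (((c:ℝ)-j-1+1)*(1-p)) = w * (((n:ℝ)-c+j+1) * p)
    set B : ℝ := ((c + j : ℕ):ℝ) + 1 with hB
    set Q : ℝ := ((n:ℝ) - c + j + 1) * p with hQ
    have hBval : B = (c:ℝ) + j + 1 := by rw [hB]; push_cast; ring
    have hznn : 0 ≤ z := f_nonneg hp.le hp1.le _
    have hNc : (0:ℝ) ≤ (n:ℝ) - c - j := by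
      have : c + j + 1 ≤ n := by omega
      have h' := (Nat.cast_le (α := ℝ)).mpr this
      push_cast at h'; linarith
    have hQpos : 0 < Q := by
      rw [hQ]
      have : (0:ℝ) ≤ (j:ℝ) := Nat.cast_nonneg j
      have h' := (Nat.cast_le (α := ℝ)).mpr hcn
      nlinarith
    have hBpos : 0 < B * (1-p) := by
      rw [hBval]
      have : (0:ℝ) ≤ (c:ℝ) + j := by positivity
      nlinarith
    have s1 : x * ((B * (1-p)) * Q) = y * (((n:ℝ)-c-j) * p) * Q := by
      linear_combination Q * E1
    have s2 : y * (((n:ℝ)-c-j) * p) * Q ≤ z * (((n:ℝ)-c-j) * p) * Q := by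
      apply mul_le_mul_of_nonneg_right _ hQpos.le
      exact mul_le_mul_of_nonneg_right hle (by positivity)
    have s3 : z * (((n:ℝ)-c-j) * p) * Q ≤ z * ((1-p)^2 * (((c:ℝ) - j) * ((c:ℝ) + j + 1))) := by
      calc z * (((n:ℝ)-c-j) * p) * Q
          = z * (p^2 * (((n:ℝ) - c - j) * ((n:ℝ) - c + j + 1))) := by rw [hQ]; ring
        _ ≤ z * ((1-p)^2 * (((c:ℝ) - j) * ((c:ℝ) + j + 1))) :=
            mul_le_mul_of_nonneg_left hcoeff hznn
    have s4 : z * ((1-p)^2 * (((c:ℝ) - j) * ((c:ℝ) + j + 1))) = w * ((B * (1-p)) * Q) := by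
      rw [hBval]
      linear_combination ((c:ℝ) + j + 1) * (1 - p) * E2
    have : x * ((B * (1-p)) * Q) ≤ w * ((B * (1-p)) * Q) := by linarith
    exact le_of_mul_le_mul_right this (by positivity)

lemma up_step (n c i : ℕ) (p : ℝ) (hp : 0 < p) (hp1 : p < 1) (hi : i + 1 ≤ c) (htop : c + i < n)
    (hcoeff : (1-p)^2 * (((c:ℝ) - i) * ((c:ℝ) + i + 1)) ≤ p^2 * (((n:ℝ) - c - i) * ((n:ℝ) - c + i + 1)))
    (hlt : f n p (c - i) < f n p (c + i)) :
    f n p (c - (i+1)) < f n p (c + i + 1) := by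
  have E1 := step n p (c + i)
  have E2 := step n p (c - (i+1))
  have hidx : c - (i+1) + 1 = c - i := by omega
  rw [hidx] at E2
  set u := f n p (c + i + 1)
  set y := f n p (c + i)
  set z := f n p (c - i)
  set x := f n p (c - (i+1))
  have hc1 : ((n - (c + i) : ℕ) : ℝ) = (n:ℝ) - c - i := by
    have h1 : (n - (c+i)) + (c+i) = n := by omega
    have h1' := congrArg (Nat.cast (R := ℝ)) h1
    push_cast at h1'; linarith
  have hc2 : ((n - (c - (i+1)) : ℕ) : ℝ) = (n:ℝ) - c + i + 1 := by
    have h1 : (n - (c - (i+1))) + (c - (i+1)) = n := by omega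
    have h2 : (c - (i+1)) + (i+1) = c := by omega
    have h1' := congrArg (Nat.cast (R := ℝ)) h1
    have h2' := congrArg (Nat.cast (R := ℝ)) h2
    push_cast at h1' h2'; linarith
  have hc3 : ((c - (i+1) : ℕ) : ℝ) = (c:ℝ) - i - 1 := by
    have h2 : (c - (i+1)) + (i+1) = c := by omega
    have h2' := congrArg (Nat.cast (R := ℝ)) h2
    push_cast at h2'; linarith
  rw [hc1] at E1
  rw [hc2, hc3] at E2
  set B : ℝ := ((c + i : ℕ):ℝ) + 1 with hB
  set Q : ℝ := ((n:ℝ) - c + i + 1) * p with hQ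
  have hBval : B = (c:ℝ) + i + 1 := by rw [hB]; push_cast; ring
  have hynn : 0 ≤ y := f_nonneg hp.le hp1.le _
  have hCI : (1:ℝ) ≤ (c:ℝ) - i := by
    have : i + 1 ≤ c := hi
    have h' := (Nat.cast_le (α := ℝ)).mpr this
    push_cast at h'; linarith
  have hQpos : 0 < Q := by
    rw [hQ]
    have : (0:ℝ) ≤ (i:ℝ) := Nat.cast_nonneg i
    have h' := (Nat.cast_le (α := ℝ)).mpr (show c ≤ n by omega)
    nlinarith
  have hBpos : 0 < B * (1-p) := by
    rw [hBval]
    have : (0:ℝ) ≤ (c:ℝ) + i := by positivity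
    nlinarith
  have hCL : (0:ℝ) < (1-p)^2 * (((c:ℝ) - i) * ((c:ℝ) + i + 1)) := by
    have h1 : (0:ℝ) < (1-p)^2 := by nlinarith
    have hci0 : (0:ℝ) ≤ (c:ℝ) + i := by positivity
    have h2 : (0:ℝ) < ((c:ℝ) - i) * ((c:ℝ) + i + 1) := by nlinarith
    exact mul_pos h1 h2
  have s1 : x * ((B * (1-p)) * Q) = z * ((1-p)^2 * (((c:ℝ) - i) * ((c:ℝ) + i + 1))) := by
    rw [hBval]
    linear_combination (-(((c:ℝ) + i + 1) * (1 - p))) * E2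
  have s2 : z * ((1-p)^2 * (((c:ℝ) - i) * ((c:ℝ) + i + 1)))
      < y * ((1-p)^2 * (((c:ℝ) - i) * ((c:ℝ) + i + 1))) :=
    mul_lt_mul_of_pos_right hlt hCL
  have s3 : y * ((1-p)^2 * (((c:ℝ) - i) * ((c:ℝ) + i + 1)))
      ≤ y * (p^2 * (((n:ℝ) - c - i) * ((n:ℝ) - c + i + 1))) :=
    mul_le_mul_of_nonneg_left hcoeff hynn
  have s4 : y * (p^2 * (((n:ℝ) - c - i) * ((n:ℝ) - c + i + 1))) = u * ((B * (1-p)) * Q) := by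
    linear_combination (-Q) * E1
  have : x * ((B * (1-p)) * Q) < u * ((B * (1-p)) * Q) := by linarith
  exact lt_of_mul_lt_mul_right this (by positivity)

lemma lt_top (n c i : ℕ) (p : ℝ) (hp : 0 < p) (hp2 : p ≤ 1/2) (hi1 : 1 ≤ i) (hic : i ≤ c)
    (hcn : c ≤ n) (h : f n p (c - i) < f n p (c + i)) : c + i < n := by
  have hp1 : p < 1 := by linarith
  rcases lt_trichotomy (c + i) n with h1 | h1 | h1
  · exact h1
  · exfalso
    -- c + i = n
    have hsub : n - (c - i) = 2 * i := by omega
    have hfn : f n p (c + i) = p ^ (c - i) * p ^ (2 * i) := by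
      unfold f
      rw [← h1]
      simp [Nat.choose_self, Nat.sub_self]
      rw [← pow_add]
      congr 1
      omega
    have hflow : f n p (c - i) = ((n.choose (c - i) : ℕ) : ℝ) * p ^ (c - i) * (1 - p) ^ (2 * i) := by
      unfold f
      rw [hsub]
    have hCge : (1:ℝ) ≤ ((n.choose (c - i) : ℕ) : ℝ) := by
      exact_mod_cast Nat.one_le_iff_ne_zero.mpr (Nat.choose_pos (by omega : c - i ≤ n)).ne'
    have hpow : p ^ (2 * i) ≤ (1 - p) ^ (2 * i) := pow_le_pow_left₀ hp.le (by linarith) _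
    have hplow : (0:ℝ) < p ^ (c - i) := pow_pos hp _
    have hge : f n p (c + i) ≤ f n p (c - i) := by
      rw [hfn, hflow]
      calc p ^ (c - i) * p ^ (2 * i) ≤ p ^ (c - i) * (1 - p) ^ (2 * i) :=
            mul_le_mul_of_nonneg_left hpow hplow.le
        _ ≤ ((n.choose (c - i) : ℕ) : ℝ) * p ^ (c - i) * (1 - p) ^ (2 * i) := by
            have hX : (0:ℝ) ≤ p ^ (c - i) * (1 - p) ^ (2 * i) :=
              mul_nonneg hplow.le (pow_nonneg (by linarith) _)
            nlinarith [mul_le_mul_of_nonneg_right hCge hX]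
    linarith
  · exfalso
    rw [f_zero p h1] at h
    have := f_nonneg hp.le hp1.le (n := n) (p := p) (c - i)
    linarith

lemma down_chain (n c k : ℕ) (p : ℝ) (hp : 0 < p) (hp1 : p < 1) (hk : k ≤ c) (hcn : c ≤ n)
    (hcond : ∀ j : ℕ, j + 1 ≤ k →
      p^2 * (((n:ℝ) - c - j) * ((n:ℝ) - c + j + 1)) ≤ (1-p)^2 * (((c:ℝ) - j) * ((c:ℝ) + j + 1))) :
    f n p (c + k) ≤ f n p (c - k) := by
  induction k with
  | zero => simp
  | succ k ih =>
    have hle := ih (by omega) (fun j hj => hcond j (by omega))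
    exact down_step n c k p hp hp1 (by omega) hcn (hcond k le_rfl) hle

lemma cond_of_pos (n c k : ℕ) (p : ℝ) (hp : 0 < p) (hp2 : p ≤ 1/2) (hk1 : 1 ≤ k) (hk : k ≤ c)
    (hcn : c ≤ n) (hpos : f n p (c - k) < f n p (c + k)) :
    (1-p)^2 * (((c:ℝ) - k) * ((c:ℝ) + k + 1)) ≤ p^2 * (((n:ℝ) - c - k) * ((n:ℝ) - c + k + 1)) := by
  by_contra hcon
  push_neg at hcon
  have hcond : ∀ j : ℕ, j + 1 ≤ k →
      p^2 * (((n:ℝ) - c - j) * ((n:ℝ) - c + j + 1)) ≤ (1-p)^2 * (((c:ℝ) - j) * ((c:ℝ) + j + 1)) := by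
    intro j hj
    have hjk : (j:ℝ) ≤ (k:ℝ) := by exact_mod_cast (show j ≤ k by omega)
    have hj0 : (0:ℝ) ≤ (j:ℝ) := Nat.cast_nonneg j
    nlinarith [hcon, mul_nonneg (mul_nonneg (sub_nonneg.mpr hjk) (by linarith : (0:ℝ) ≤ (j:ℝ) + (k:ℝ) + 1)) (by linarith : (0:ℝ) ≤ 1 - 2*p)]
  have := down_chain n c k p hp (by linarith) hk hcn hcond
  linarith

lemma e_nonneg_of_pos (n c k : ℕ) (p : ℝ) (hp : 0 < p) (hp2 : p ≤ 1/2) (hcn : c ≤ n)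
    (hk1 : 1 ≤ k) (hpos : 0 < eterm n c p k) :
    ∀ i, k ≤ i → 0 ≤ eterm n c p i := by
  have hp1 : p < 1 := by linarith
  -- invariant
  set W : ℕ → Prop := fun i => c < i ∨ (i ≤ c ∧ f n p (c - i) < f n p (c + i) ∧
    (1-p)^2 * (((c:ℝ) - i) * ((c:ℝ) + i + 1)) ≤ p^2 * (((n:ℝ) - c - i) * ((n:ℝ) - c + i + 1)))
    with hW
  have hWe : ∀ i, W i → 0 ≤ eterm n c p i := by
    intro i hi
    rcases hi with hi | ⟨hic, hlt, _⟩
    · unfold eterm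
      rw [if_neg (by omega)]
      simpa using f_nonneg hp.le hp1.le (c + i)
    · unfold eterm
      rw [if_pos hic]
      linarith
  have hWk : W k := by
    rcases le_or_gt k c with hkc | hkc
    · right
      have hlt : f n p (c - k) < f n p (c + k) := by
        have := hpos
        unfold eterm at this
        rw [if_pos hkc] at this
        linarith
      exact ⟨hkc, hlt, cond_of_pos n c k p hp hp2 hk1 hkc hcn hlt⟩
    · left; exact hkc
  have hWstep : ∀ i, k ≤ i → W i → W (i+1) := by
    intro i hki hWi
    rcases hWi with hci | ⟨hic, hlt, hcoeff⟩
    · left; omega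
    · rcases le_or_gt (i+1) c with hic1 | hic1
      · right
        have hi1 : 1 ≤ i := le_trans hk1 hki
        have htop : c + i < n := lt_top n c i p hp hp2 hi1 hic hcn hlt
        have hup := up_step n c i p hp hp1 hic1 htop hcoeff hlt
        refine ⟨hic1, ?_, ?_⟩
        · have : c + (i+1) = c + i + 1 := by omega
          rw [this]
          exact hup
        · -- coefficient monotone
          have hi0 : (0:ℝ) ≤ (i:ℝ) := Nat.cast_nonneg i
          push_cast
          nlinarith [hcoeff, mul_nonneg (mul_nonneg (by linarith : (0:ℝ) ≤ (2:ℝ)) (by linarith : (0:ℝ) ≤ (i:ℝ) + 1)) (by linarith : (0:ℝ) ≤ 1 - 2*p)]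
      · left; exact hic1
  intro i hki
  apply hWe
  induction i, hki using Nat.le_induction with
  | base => exact hWk
  | succ m hm ih => exact hWstep m hm ih

lemma key_sign (n c : ℕ) (p : ℝ) (hp : 0 < p) (hp2 : p ≤ 1/2) (hcn : c ≤ n) :
    ∃ K : ℕ, 1 ≤ K ∧ (∀ k, 1 ≤ k → k < K → eterm n c p k ≤ 0) ∧
      (∀ k, K ≤ k → k ≤ n → 0 ≤ eterm n c p k) := by
  letI : DecidablePred (fun k => eterm n c p k < 0) := Classical.decPred _
  by_cases hex : ∃ k, 1 ≤ k ∧ k ≤ n ∧ eterm n c p k < 0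
  · obtain ⟨k0, hk01, hk0n, hk0neg⟩ := hex
    set fg := Nat.findGreatest (fun k => eterm n c p k < 0) n with hfg
    have hPfg : eterm n c p fg < 0 := Nat.findGreatest_spec (P := fun k => eterm n c p k < 0) hk0n hk0neg
    have hfgn : fg ≤ n := Nat.findGreatest_le n
    have hfg1 : 1 ≤ fg := by
      rcases Nat.eq_zero_or_pos fg with h0 | h1
      · exfalso
        rw [h0] at hPfg
        have : eterm n c p 0 = 0 := by
          unfold eterm
          rw [if_pos (by omega)]
          simp
        linarith
      · exact h1
    refine ⟨fg + 1, by omega, ?_, ?_⟩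
    · intro k hk1 hkK
      by_contra hpos
      push_neg at hpos
      have hkfg : k ≤ fg := Nat.lt_succ_iff.mp hkK
      have := e_nonneg_of_pos n c k p hp hp2 hcn hk1 hpos fg hkfg
      linarith
    · intro k hKk hkn
      by_contra hneg
      push_neg at hneg
      have hfgk : fg < k := by omega
      exact Nat.findGreatest_is_greatest (P := fun k => eterm n c p k < 0) hfgk hkn hneg
  · push_neg at hex
    exact ⟨1, le_rfl, fun k hk1 hkK => by omega, fun k hk1 hkn => hex k hk1 hkn⟩

lemma upper (n c : ℕ) (p : ℝ) (hp : 0 < p) (hp2 : p ≤ 1/2) (hc : (n:ℝ) * p ≤ c)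
    (hcn : c ≤ n) : 1/2 < ∑ j ∈ range (c + 1), f n p j := by
  classical
  have hp1 : p < 1 := by linarith
  set A := ∑ k ∈ range n, f n p (c + (k+1)) with hA
  set B := ∑ k ∈ range n, (if k + 1 ≤ c then f n p (c - (k+1)) else 0) with hB
  -- A as upper tail
  have hAeq : A = ∑ j ∈ Finset.Ico (c+1) (n+1), f n p j := by
    rw [hA]
    have h1 : ∑ k ∈ range n, f n p (c + (k+1)) = ∑ k ∈ range (n - c), f n p (c + (k+1)) := by
      symm
      apply Finset.sum_subset (Finset.range_subset_range.mpr (by omega))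
      intro k _ hk
      simp only [Finset.mem_range, not_lt] at hk
      exact f_zero p (by omega)
    rw [h1, Finset.sum_Ico_eq_sum_range]
    have hlen : n + 1 - (c+1) = n - c := by omega
    rw [hlen]
    exact Finset.sum_congr rfl fun i _ => by rw [show c + 1 + i = c + (i+1) from by omega]
  -- B as lower part
  have hBeq : B = ∑ j ∈ range c, f n p j := by
    rw [hB]
    have h1 : ∑ k ∈ range n, (if k + 1 ≤ c then f n p (c - (k+1)) else 0)
        = ∑ k ∈ range c, f n p (c - 1 - k) := by
      rw [← Finset.sum_subset (Finset.range_subset_range.mpr hcn)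
        (fun k _ hk => by
          simp only [Finset.mem_range, not_lt] at hk
          rw [if_neg (by omega)])]
      refine Finset.sum_congr rfl fun k hk => ?_
      have hkc := Finset.mem_range.mp hk
      rw [if_pos (by omega : k + 1 ≤ c)]
      congr 1
      omega
    rw [h1]
    exact Finset.sum_range_reflect _ _
  -- total
  have htot : A + (∑ j ∈ range (c+1), f n p j) = 1 := by
    rw [hAeq]
    have h := Finset.sum_Ico_consecutive (f := fun j => f n p j) (m := 0) (n := c+1) (k := n+1)
      (by omega) (by omega)
    simp only [← Finset.range_eq_Ico] at h
    rw [← sum_f n p, ← h]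
    ring
  -- F(c) = B + f c
  have hFc : ∑ j ∈ range (c+1), f n p j = B + f n p c := by
    rw [hBeq, Finset.sum_range_succ]
  -- weighted sum identity
  have hmean : ∑ j ∈ range (n+1), ((j:ℝ) - c) * f n p j = (n:ℝ) * p - c := by
    have h1 : ∑ j ∈ range (n+1), ((j:ℝ) - c) * f n p j
        = (∑ j ∈ range (n+1), (j:ℝ) * f n p j) - c * ∑ j ∈ range (n+1), f n p j := by
      rw [Finset.mul_sum, ← Finset.sum_sub_distrib]
      exact Finset.sum_congr rfl fun j _ => by ring
    rw [h1, mean_f, sum_f]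
    ring
  have hsplitmean : ∑ j ∈ range (n+1), ((j:ℝ) - c) * f n p j
      = (∑ k ∈ range n, ((k:ℝ)+1) * f n p (c + (k+1)))
        - ∑ k ∈ range n, ((k:ℝ)+1) * (if k + 1 ≤ c then f n p (c - (k+1)) else 0) := by
    -- T⁺
    have hTp : ∑ k ∈ range n, ((k:ℝ)+1) * f n p (c + (k+1))
        = ∑ j ∈ Finset.Ico (c+1) (n+1), ((j:ℝ) - c) * f n p j := by
      have h1 : ∑ k ∈ range n, ((k:ℝ)+1) * f n p (c + (k+1))
          = ∑ k ∈ range (n - c), ((k:ℝ)+1) * f n p (c + (k+1)) := by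
        symm
        apply Finset.sum_subset (Finset.range_subset_range.mpr (by omega))
        intro k _ hk
        simp only [Finset.mem_range, not_lt] at hk
        rw [f_zero p (by omega)]
        ring
      rw [h1, Finset.sum_Ico_eq_sum_range]
      have hlen : n + 1 - (c+1) = n - c := by omega
      rw [hlen]
      apply Finset.sum_congr rfl
      intro i _
      rw [show c + 1 + i = c + (i+1) from by omega]
      push_cast
      ring
    -- T⁻
    have hTm : ∑ k ∈ range n, ((k:ℝ)+1) * (if k + 1 ≤ c then f n p (c - (k+1)) else 0)
        = ∑ j ∈ range c, ((c:ℝ) - j) * f n p j := by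
      have h1 : ∑ k ∈ range n, ((k:ℝ)+1) * (if k + 1 ≤ c then f n p (c - (k+1)) else 0)
          = ∑ k ∈ range c, ((k:ℝ)+1) * f n p (c - 1 - k) := by
        rw [← Finset.sum_subset (Finset.range_subset_range.mpr hcn)
          (fun k _ hk => by
            simp only [Finset.mem_range, not_lt] at hk
            rw [if_neg (by omega)]
            ring)]
        refine Finset.sum_congr rfl fun k hk => ?_
        have hkc := Finset.mem_range.mp hk
        rw [if_pos (by omega : k + 1 ≤ c)]
        congr 2
        omega
      rw [h1, ← Finset.sum_range_reflect (fun k => ((k:ℝ)+1) * f n p (c - 1 - k)) c]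
      refine Finset.sum_congr rfl fun j hj => ?_
      have hjc := Finset.mem_range.mp hj
      have e1 : c - 1 - (c - 1 - j) = j := by omega
      rw [e1]
      have e2 : ((c - 1 - j : ℕ) : ℝ) = (c:ℝ) - 1 - j := by
        have h : (c - 1 - j) + (1 + j) = c := by omega
        have h' := congrArg (Nat.cast (R := ℝ)) h
        push_cast at h'
        linarith
      rw [e2]
      ring
    -- combine
    rw [hTp, hTm]
    have hsplit1 : ∑ j ∈ range (n+1), ((j:ℝ) - c) * f n p j
        = ∑ j ∈ range c, ((j:ℝ) - c) * f n p j + ∑ j ∈ Finset.Ico c (n+1), ((j:ℝ) - c) * f n p j := by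
      have h := Finset.sum_Ico_consecutive (f := fun j => ((j:ℝ) - c) * f n p j) (m := 0) (n := c) (k := n+1)
        (by omega) (by omega)
      simp only [← Finset.range_eq_Ico] at h
      rw [← h]
    have hsplit2 : ∑ j ∈ Finset.Ico c (n+1), ((j:ℝ) - c) * f n p j
        = ∑ j ∈ Finset.Ico (c+1) (n+1), ((j:ℝ) - c) * f n p j := by
      rw [Finset.sum_eq_sum_Ico_succ_bot (by omega : c < n+1)]
      simp
    have hneg : ∑ j ∈ range c, ((j:ℝ) - c) * f n p j = - ∑ j ∈ range c, ((c:ℝ) - j) * f n p j := by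
      rw [← Finset.sum_neg_distrib]
      exact Finset.sum_congr rfl fun j _ => by ring
    rw [hsplit1, hsplit2, hneg]
    ring
  -- sign structure and conclusion A ≤ B
  have hAB : A ≤ B := by
    obtain ⟨K, hK1, hW2, hW3⟩ := key_sign n c p hp hp2 hcn
    have hterm : ∀ k ∈ range n, 0 ≤ (((k:ℝ)+1) - K) * eterm n c p (k+1) := by
      intro k hk
      have hkn := Finset.mem_range.mp hk
      rcases lt_or_ge (k+1) K with hlt | hge
      · have h1 := hW2 (k+1) (by omega) hlt
        have h2 : ((k:ℝ)+1) - K ≤ 0 := by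
          have h3 : ((k+1 : ℕ):ℝ) ≤ (K:ℝ) := by exact_mod_cast Nat.le_of_lt hlt
          push_cast at h3
          linarith
        nlinarith [h1, h2]
      · have h1 := hW3 (k+1) hge (by omega)
        have h2 : (0:ℝ) ≤ ((k:ℝ)+1) - K := by
          have h3 : (K:ℝ) ≤ ((k+1 : ℕ):ℝ) := by exact_mod_cast hge
          push_cast at h3
          linarith
        exact mul_nonneg h2 h1
    have hsum_nonneg : 0 ≤ ∑ k ∈ range n, (((k:ℝ)+1) - K) * eterm n c p (k+1) :=
      Finset.sum_nonneg hterm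
    have hexpand : ∑ k ∈ range n, (((k:ℝ)+1) - K) * eterm n c p (k+1)
        = (∑ k ∈ range n, ((k:ℝ)+1) * eterm n c p (k+1)) - K * ∑ k ∈ range n, eterm n c p (k+1) := by
      rw [Finset.mul_sum, ← Finset.sum_sub_distrib]
      exact Finset.sum_congr rfl fun k _ => by ring
    have heA : ∑ k ∈ range n, eterm n c p (k+1) = A - B := by
      rw [hA, hB, ← Finset.sum_sub_distrib]
      rfl
    have heT : ∑ k ∈ range n, ((k:ℝ)+1) * eterm n c p (k+1) = (n:ℝ) * p - c := by
      rw [← hmean, hsplitmean]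
      rw [← Finset.sum_sub_distrib]
      refine (Finset.sum_congr rfl fun k _ => ?_).symm
      unfold eterm
      ring
    rw [hexpand, heA, heT] at hsum_nonneg
    have hKpos : (0:ℝ) < (K:ℝ) := by
      have : (1:ℝ) ≤ (K:ℝ) := by exact_mod_cast hK1
      linarith
    nlinarith [hsum_nonneg, hKpos, hc]
  -- finish
  have hfc : 0 < f n p c := f_pos hp hp1 hcn
  rw [hFc] at htot ⊢
  linarith
lemma b_star (n k : ℕ) (x : ℝ) (hx : 0 < x) (hx1 : x < 1) (h : (k:ℝ) + 1 ≤ (n:ℝ) * x) :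
    ∑ j ∈ range (k+1), f n x j < 1/2 := by
  have hn0 : (0:ℝ) < (n:ℝ) := by nlinarith [Nat.cast_nonneg (α := ℝ) k]
  have hkn : (k:ℝ) + 1 < (n:ℝ) := by nlinarith
  have hknn : k + 1 ≤ n := by
    have : ((k+1 : ℕ):ℝ) < (n:ℝ) := by push_cast; linarith
    exact_mod_cast this.le
  rcases le_or_gt x (1/2) with hx2 | hx2
  · have := lower n (k+1) x hx hx2 (by omega) (by push_cast; linarith)
    exact this
  · have hkn' : k ≤ n := by omega
    rw [cdf_sym x hkn']
    have hc : n - k = (n - k - 1) + 1 := by omega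
    have hcast : ((n - k - 1 : ℕ) : ℝ) = (n:ℝ) - k - 1 := by
      have hh : (n - k - 1) + (k + 1) = n := by omega
      have hh' := congrArg (Nat.cast (R := ℝ)) hh
      push_cast at hh'
      linarith
    have hupper := upper n (n - k - 1) (1 - x) (by linarith) (by linarith)
      (by rw [hcast]; nlinarith) (by omega)
    rw [← hc] at hupper
    linarith

lemma c_star (n c : ℕ) (x : ℝ) (hx : 0 < x) (hx1 : x < 1) (h : (n:ℝ) * x ≤ (c:ℝ)) :
    1/2 < ∑ j ∈ range (c+1), f n x j := by
  rcases le_or_gt n c with hnc | hnc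
  · have : ∑ j ∈ range (c+1), f n x j = 1 := by
      rw [← sum_f n x]
      symm
      apply Finset.sum_subset (Finset.range_subset_range.mpr (by omega))
      intro j _ hj
      simp only [Finset.mem_range, not_lt] at hj
      exact f_zero x (by omega)
    rw [this]
    norm_num
  · rcases le_or_gt x (1/2) with hx2 | hx2
    · exact upper n c x hx hx2 h (by omega)
    · rw [cdf_sym x (by omega : c ≤ n)]
      have hcast : ((n - c : ℕ) : ℝ) = (n:ℝ) - c := by
        have hh : (n - c) + c = n := by omega
        have hh' := congrArg (Nat.cast (R := ℝ)) hh
        push_cast at hh'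
        linarith
      have hlower := lower n (n - c) (1 - x) (by linarith) (by linarith) (by omega)
        (by rw [hcast]; nlinarith)
      linarith

end BinomAux

/-- Bounds on the equilibrium threshold of the Binomial Fisher game: if `k*` is the least
`k ∈ {0,…,N}` with `Σ_{j≤k} (p_j(x_A) + p_j(x_B)) > 1` for the binomial weights
`p_k(x) = C(N,k)·x^k·(1−x)^{N−k}`, then `⌊x_A·N⌋ ≤ k* ≤ ⌈x_B·N⌉`. -/
theorem stmt_8 (N : ℕ) (xA xB : ℝ)
    (hA : xA ∈ Set.Ioo (0:ℝ) 1) (hB : xB ∈ Set.Ioo (0:ℝ) 1) (hAB : xA ≤ xB)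
    (p : ℝ → ℕ → ℝ)
    (hp : ∀ x k, p x k = (N.choose k : ℝ) * x ^ k * (1 - x) ^ (N - k))
    (kstar : ℕ) (hk : kstar ≤ N)
    (hgt : 1 < ∑ j ∈ Finset.range (kstar + 1), (p xA j + p xB j))
    (hleast : ∀ k < kstar, (∑ j ∈ Finset.range (k + 1), (p xA j + p xB j)) ≤ 1) :
    ⌊xA * N⌋ ≤ (kstar : ℤ) ∧ (kstar : ℤ) ≤ ⌈xB * N⌉ := by
  obtain ⟨hA0, hA1⟩ := hA
  obtain ⟨hB0, hB1⟩ := hB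
  have hsum : ∀ t : ℕ, ∑ j ∈ Finset.range (t + 1), (p xA j + p xB j)
      = (∑ j ∈ Finset.range (t+1), BinomAux.f N xA j)
        + (∑ j ∈ Finset.range (t+1), BinomAux.f N xB j) := by
    intro t
    rw [← Finset.sum_add_distrib]
    refine Finset.sum_congr rfl fun j _ => ?_
    rw [hp xA j, hp xB j]
    rfl
  constructor
  · by_contra hcon
    push_neg at hcon
    have h1 : (kstar : ℤ) + 1 ≤ ⌊xA * N⌋ := by omega
    have h2 : ((kstar : ℝ) + 1) ≤ xA * N := by
      have := Int.le_floor.mp h1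
      push_cast at this
      linarith
    have hA' := BinomAux.b_star N kstar xA hA0 hA1 (by linarith [mul_comm xA (N:ℝ)])
    have hB' := BinomAux.b_star N kstar xB hB0 hB1 (by
      have hNn : (0:ℝ) ≤ (N:ℝ) := Nat.cast_nonneg N
      nlinarith)
    rw [hsum kstar] at hgt
    linarith
  · by_contra hcon
    push_neg at hcon
    have hcZ : (0:ℤ) ≤ ⌈xB * N⌉ := Int.ceil_nonneg (by positivity)
    set c := (⌈xB * N⌉).toNat with hc
    have hcc : (c : ℤ) = ⌈xB * N⌉ := Int.toNat_of_nonneg hcZ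
    have hck : c < kstar := by omega
    have hcr : xB * N ≤ (c : ℝ) := by
      have := Int.le_ceil (xB * N)
      have h2 : ((c:ℤ):ℝ) = ((⌈xB * N⌉ : ℤ) : ℝ) := by rw [hcc]
      push_cast at h2
      linarith
    have hB' := BinomAux.c_star N c xB hB0 hB1 (by linarith [mul_comm xB (N:ℝ)])
    have hA' := BinomAux.c_star N c xA hA0 hA1 (by
      have hNn : (0:ℝ) ≤ (N:ℝ) := Nat.cast_nonneg N
      nlinarith)
    have := hleast c hck
    rw [hsum c] at this
    linarith
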